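/- Let (X, m) be a probability space with a measure-preserving action of ℤⁿ, and let (C_k) be a sequence of measurable sets with m(C_k) = c > 0 for all k, such that for every fixed z ∈ ℤⁿ we have m(T^z C_k Δ C_k) → 0 as k → ∞. Assume the action is ergodic. Then for every integrable function f : X → ℝ, ∫_{C_k} f dm → c · ∫_X f dm as k → ∞. -/

import Mathlib

open MeasureTheory Filter
open scoped symmDiff

/-- The cube `Q_N = {z ∈ ℤⁿ : 1 ≤ z_i ≤ N}`. -/
noncomputable def cube (n N : ℕ) : Finset (Fin n → ℤ) := Finset.Icc 1 (fun _ => (N : ℤ))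

section Aux

variable {X : Type*} [MeasurableSpace X] {m : Measure X}
  {n : ℕ} {T : (Fin n → ℤ) → X → X}

/-- An a.e.-invariant measurable set for an ergodic action has measure `0` or `1`. -/
lemma erg_set [IsProbabilityMeasure m]
    (hmp : ∀ z, MeasurePreserving (T z) m m)
    (hact : ∀ z w x, T (z + w) x = T z (T w x)) (hid : ∀ x, T 0 x = x)
    (herg : ∀ S : Set X, MeasurableSet S → (∀ z, T z ⁻¹' S = S) → m S = 0 ∨ m S = 1)
    {S : Set X} (hS : MeasurableSet S) (hSi : ∀ z, T z ⁻¹' S =ᵐ[m] S) :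
    m S = 0 ∨ m S = 1 := by
  set U : Set X := ⋃ z, T z ⁻¹' S with hUdef
  have hUm : MeasurableSet U := MeasurableSet.iUnion fun z => (hmp z).measurable hS
  have hUinv : ∀ w, T w ⁻¹' U = U := by
    intro w
    ext x
    simp only [hUdef, Set.mem_iUnion, Set.mem_preimage]
    constructor
    · rintro ⟨z, hz⟩
      exact ⟨z + w, by rwa [hact]⟩
    · rintro ⟨z, hz⟩
      refine ⟨z - w, ?_⟩
      rw [← hact]
      simpa using hz
  have hSU : S ⊆ U := fun x hx => Set.mem_iUnion.2 ⟨0, by simpa [hid] using hx⟩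
  have hUS : m (U \ S) = 0 := by
    have hsub : U \ S ⊆ ⋃ z, (T z ⁻¹' S \ S) := by
      rintro x ⟨hxU, hxS⟩
      obtain ⟨z, hz⟩ := Set.mem_iUnion.1 hxU
      exact Set.mem_iUnion.2 ⟨z, ⟨hz, hxS⟩⟩
    exact measure_mono_null hsub (measure_iUnion_null fun z => (ae_eq_set.1 (hSi z)).1)
  have hUeq : m U = m S :=
    measure_congr (ae_eq_set.2 ⟨hUS, by simp [Set.diff_eq_empty.2 hSU]⟩)
  rw [← hUeq]
  exact herg U hUm hUinv

/-- An a.e.-invariant measurable real function for an ergodic action is a.e. constant. -/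
lemma erg_fun [IsProbabilityMeasure m]
    (hmp : ∀ z, MeasurePreserving (T z) m m)
    (hact : ∀ z w x, T (z + w) x = T z (T w x)) (hid : ∀ x, T 0 x = x)
    (herg : ∀ S : Set X, MeasurableSet S → (∀ z, T z ⁻¹' S = S) → m S = 0 ∨ m S = 1)
    {g : X → ℝ} (hgm : Measurable g)
    (hg : ∀ z, g ∘ T z =ᵐ[m] g) : ∃ b : ℝ, g =ᵐ[m] fun _ => b := by
  have key : ∀ V : Set ℝ, MeasurableSet V →
      (∀ᵐ x ∂m, g x ∈ V) ∨ (∀ᵐ x ∂m, g x ∉ V) := by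
    intro V hV
    have hSm : MeasurableSet (g ⁻¹' V) := hgm hV
    have hinv' : ∀ z, T z ⁻¹' (g ⁻¹' V) =ᵐ[m] g ⁻¹' V := fun z =>
      ((hg z).mono fun x hx => by
        simp only [Set.mem_preimage, Function.comp_apply] at *
        rw [hx]).set_eq
    rcases erg_set hmp hact hid herg hSm hinv' with h | h
    · exact Or.inr (measure_eq_zero_iff_ae_notMem.1 h)
    · refine Or.inl ?_
      have hcompl : m (g ⁻¹' V)ᶜ = 0 := by
        rw [measure_compl hSm (measure_ne_top m _), h, measure_univ, tsub_self]
      exact (measure_eq_zero_iff_ae_notMem.1 hcompl).mono fun x hx => Set.not_notMem.1 hx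
  exact exists_eventuallyEq_const_of_forall_separating (l := ae m) MeasurableSet key

/-- Each `T z` is a measurable equivalence. -/
def mkEquiv (hmp : ∀ z, MeasurePreserving (T z) m m)
    (hact : ∀ z w x, T (z + w) x = T z (T w x)) (hid : ∀ x, T 0 x = x)
    (z : Fin n → ℤ) : X ≃ᵐ X where
  toFun := T z
  invFun := T (-z)
  left_inv x := by rw [← hact]; simp [hid]
  right_inv x := by rw [← hact]; simp [hid]
  measurable_toFun := (hmp z).measurable
  measurable_invFun := (hmp (-z)).measurable

/-- Coboundary convergence: `∫_{C_k} (h ∘ T^z − h) → 0`. -/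
lemma cob [IsProbabilityMeasure m]
    (hmp : ∀ z, MeasurePreserving (T z) m m)
    (hact : ∀ z w x, T (z + w) x = T z (T w x)) (hid : ∀ x, T 0 x = x)
    (C : ℕ → Set X) (hCmeas : ∀ k, MeasurableSet (C k))
    (hinv : ∀ z : Fin n → ℤ,
      Tendsto (fun k => m ((T z '' C k) ∆ (C k))) atTop (nhds 0))
    {h : X → ℝ} (hh : Integrable h m) (z : Fin n → ℤ) :
    Tendsto (fun k => ∫ x in C k, (h (T z x) - h x) ∂m) atTop (nhds 0) := by
  have hemb : MeasurableEmbedding (T z) := (mkEquiv hmp hact hid z).measurableEmbedding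
  have hAdef : ∀ k, T z '' C k = T (-z) ⁻¹' C k := by
    intro k; ext y
    constructor
    · rintro ⟨x, hx, rfl⟩
      have : T (-z) (T z x) = x := by rw [← hact]; simp [hid]
      simpa [Set.mem_preimage, this] using hx
    · intro hy
      exact ⟨T (-z) y, hy, by rw [← hact]; simp [hid]⟩
  have hAm : ∀ k, MeasurableSet (T z '' C k) := fun k => by
    rw [hAdef]; exact (hmp (-z)).measurable (hCmeas k)
  have hhz : Integrable (fun x => h (T z x)) m :=
    ((hmp z).integrable_comp hh.aestronglyMeasurable).2 hh
  have key : ∀ k, ∫ x in C k, (h (T z x) - h x) ∂m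
      = (∫ x in (T z '' C k) \ C k, h x ∂m) - ∫ x in C k \ (T z '' C k), h x ∂m := by
    intro k
    have h1 : ∫ x in C k, h (T z x) ∂m = ∫ y in T z '' C k, h y ∂m := by
      have := (hmp z).setIntegral_preimage_emb hemb h (T z '' C k)
      rwa [hemb.injective.preimage_image] at this
    have h2 : (∫ x in (T z '' C k) ∩ C k, h x ∂m) + ∫ x in (T z '' C k) \ C k, h x ∂m
        = ∫ x in T z '' C k, h x ∂m :=
      integral_inter_add_diff (hCmeas k) hh.integrableOn
    have h3 : (∫ x in C k ∩ (T z '' C k), h x ∂m) + ∫ x in C k \ (T z '' C k), h x ∂m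
        = ∫ x in C k, h x ∂m :=
      integral_inter_add_diff (hAm k) hh.integrableOn
    rw [integral_sub hhz.integrableOn hh.integrableOn, h1, ← h2, ← h3,
      Set.inter_comm (T z '' C k) (C k)]
    ring
  have msub : ∀ (s t : Set X) k, (T z '' C k) ∆ (C k) = s ∪ t → True := fun _ _ _ _ => trivial
  have m1 : Tendsto (fun k => m ((T z '' C k) \ C k)) atTop (nhds 0) :=
    tendsto_of_tendsto_of_tendsto_of_le_of_le tendsto_const_nhds (hinv z)
      (fun k => zero_le)
      (fun k => measure_mono (by rw [Set.symmDiff_def]; exact Set.subset_union_left))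
  have m2 : Tendsto (fun k => m (C k \ (T z '' C k))) atTop (nhds 0) :=
    tendsto_of_tendsto_of_tendsto_of_le_of_le tendsto_const_nhds (hinv z)
      (fun k => zero_le)
      (fun k => measure_mono (by rw [Set.symmDiff_def]; exact Set.subset_union_right))
  have t1 := hh.tendsto_setIntegral_nhds_zero m1
  have t2 := hh.tendsto_setIntegral_nhds_zero m2
  exact Tendsto.congr (fun k => (key k).symm) (by simpa using t1.sub t2)

end Aux

theorem stmt_0 {X : Type*} [MeasurableSpace X] (m : Measure X) [IsProbabilityMeasure m]
    (n : ℕ) (T : (Fin n → ℤ) → X → X)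
    (hmp : ∀ z, MeasurePreserving (T z) m m)
    (hact : ∀ z w x, T (z + w) x = T z (T w x)) (hid : ∀ x, T 0 x = x)
    (herg : ∀ S : Set X, MeasurableSet S → (∀ z, T z ⁻¹' S = S) → m S = 0 ∨ m S = 1)
    (C : ℕ → Set X) (hCmeas : ∀ k, MeasurableSet (C k))
    (c : ℝ) (hc : 0 < c) (hCc : ∀ k, m (C k) = ENNReal.ofReal c)
    (hinv : ∀ z : Fin n → ℤ,
      Tendsto (fun k => m ((T z '' C k) ∆ (C k))) atTop (nhds 0))
    (f : X → ℝ) (hf : Integrable f m) :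
    Tendsto (fun k => ∫ x in C k, f x ∂m) atTop (nhds (c * ∫ x, f x ∂m)) := by
  classical
  have hc1 : c ≤ 1 := by
    have h1 : m (C 0) ≤ 1 := prob_le_one
    rw [hCc 0] at h1
    exact ENNReal.ofReal_le_one.1 h1
  -- congruence lemma for the target property
  have Pcongr : ∀ {g g' : X → ℝ}, g =ᵐ[m] g' →
      Tendsto (fun k => ∫ x in C k, g x ∂m) atTop (nhds (c * ∫ x, g x ∂m)) →
      Tendsto (fun k => ∫ x in C k, g' x ∂m) atTop (nhds (c * ∫ x, g' x ∂m)) := by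
    intro g g' hgg' hT
    have h1 : ∀ k, ∫ x in C k, g' x ∂m = ∫ x in C k, g x ∂m := fun k =>
      setIntegral_congr_ae (hCmeas k) (hgg'.mono fun x hx _ => hx.symm)
    have h2 : ∫ x, g' x ∂m = ∫ x, g x ∂m := integral_congr_ae hgg'.symm
    rw [show (fun k => ∫ x in C k, g' x ∂m) = fun k => ∫ x in C k, g x ∂m from funext h1, h2]
    exact hT
  -- the one function in L2
  set oneL : Lp ℝ 2 m := (memLp_const (1 : ℝ)).toLp (fun _ => (1 : ℝ)) with honeL
  set G : Set (Lp ℝ 2 m) :=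
    insert oneL {y | ∃ (z : Fin n → ℤ) (h : Lp ℝ 2 m),
      y = Lp.compMeasurePreserving (T z) (hmp z) h - h} with hG
  -- all elements of the span satisfy the property
  have hQ : ∀ y ∈ Submodule.span ℝ G,
      Tendsto (fun k => ∫ x in C k, y x ∂m) atTop (nhds (c * ∫ x, y x ∂m)) := by
    intro y hy
    induction hy using Submodule.span_induction with
    | mem y hyG =>
      rcases hyG with rfl | ⟨z, h, rfl⟩
      · refine Pcongr (g := fun _ => (1 : ℝ)) ((MemLp.coeFn_toLp _).symm) ?_
        have h1 : ∀ k, ∫ x in C k, (1 : ℝ) ∂m = c := by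
          intro k
          simp [measureReal_def, hCc k, ENNReal.toReal_ofReal hc.le]
        have h2 : (∫ x, (1 : ℝ) ∂m) = 1 := by simp
        rw [show (fun k => ∫ x in C k, (1 : ℝ) ∂m) = fun _ => c from funext h1, h2, mul_one]
        exact tendsto_const_nhds
      · have hL1 : Integrable (⇑h) m := (Lp.memLp h).integrable one_le_two
        have heq : (fun x => h (T z x) - h x) =ᵐ[m]
            ⇑(Lp.compMeasurePreserving (T z) (hmp z) h - h) := by
          filter_upwards [Lp.coeFn_sub (Lp.compMeasurePreserving (T z) (hmp z) h) h,
            Lp.coeFn_compMeasurePreserving h (hmp z)] with x h1 h2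
          rw [h1, Pi.sub_apply, h2]
          rfl
        refine Pcongr heq ?_
        have hzero : ∫ x, (h (T z x) - h x) ∂m = 0 := by
          have hcomp : ∫ x, h (T z x) ∂m = ∫ x, h x ∂m :=
            (hmp z).integral_comp (mkEquiv hmp hact hid z).measurableEmbedding ⇑h
          have hI : Integrable (fun x => (⇑h) (T z x)) m :=
            ((hmp z).integrable_comp hL1.aestronglyMeasurable).2 hL1
          rw [integral_sub hI hL1, hcomp, sub_self]
        rw [hzero, mul_zero]
        exact cob hmp hact hid C hCmeas hinv hL1 z
    | zero =>
      refine Pcongr (g := fun _ => (0 : ℝ)) (Lp.coeFn_zero ℝ 2 m).symm ?_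
      simp only [integral_zero, mul_zero]
      exact tendsto_const_nhds
    | add a b ha hb iha ihb =>
      have ia : Integrable (⇑a) m := (Lp.memLp a).integrable one_le_two
      have ib : Integrable (⇑b) m := (Lp.memLp b).integrable one_le_two
      refine Pcongr (g := fun x => a x + b x) (Lp.coeFn_add a b).symm ?_
      have h1 : ∀ k, ∫ x in C k, (a x + b x) ∂m
          = (∫ x in C k, a x ∂m) + ∫ x in C k, b x ∂m := fun k =>
        integral_add ia.integrableOn ib.integrableOn
      have h2 : ∫ x, (a x + b x) ∂m = (∫ x, a x ∂m) + ∫ x, b x ∂m := integral_add ia ib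
      rw [show (fun k => ∫ x in C k, (a x + b x) ∂m)
          = fun k => (∫ x in C k, a x ∂m) + ∫ x in C k, b x ∂m from funext h1, h2, mul_add]
      exact iha.add ihb
    | smul r a ha ih =>
      refine Pcongr (g := fun x => r * a x) ?_ ?_
      · filter_upwards [Lp.coeFn_smul r a] with x hx
        rw [hx]
        simp
      · have h1 : ∀ k, ∫ x in C k, (r * a x) ∂m = r * ∫ x in C k, a x ∂m := fun k =>
          integral_const_mul r _
        have h2 : ∫ x, (r * a x) ∂m = r * ∫ x, a x ∂m := integral_const_mul r _
        rw [show (fun k => ∫ x in C k, (r * a x) ∂m)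
            = fun k => r * ∫ x in C k, a x ∂m from funext h1, h2,
          show c * (r * ∫ x, a x ∂m) = r * (c * ∫ x, a x ∂m) by ring]
        exact ih.const_mul r
  -- density of the span
  have hKdense : (Submodule.span ℝ G).topologicalClosure = ⊤ := by
    rw [Submodule.topologicalClosure_eq_top_iff, Submodule.eq_bot_iff]
    intro φ hφ
    have horto : ∀ y ∈ G, inner ℝ y φ = (0 : ℝ) := fun y hy =>
      (Submodule.mem_orthogonal _ φ).1 hφ y (Submodule.subset_span hy)
    have hUφ : ∀ w, Lp.compMeasurePreserving (T w) (hmp w) φ = φ := by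
      intro w
      have hco : Lp.compMeasurePreserving (T (-w)) (hmp (-w))
          (Lp.compMeasurePreserving (T w) (hmp w) φ) = φ := by
        apply Lp.ext
        have e1 := Lp.coeFn_compMeasurePreserving
          (Lp.compMeasurePreserving (T w) (hmp w) φ) (hmp (-w))
        have e2 : (⇑(Lp.compMeasurePreserving (T w) (hmp w) φ)) ∘ (T (-w))
            =ᵐ[m] (⇑φ ∘ T w) ∘ (T (-w)) :=
          (hmp (-w)).quasiMeasurePreserving.ae_eq_comp
            (Lp.coeFn_compMeasurePreserving φ (hmp w)).symm |>.symm
        have e3 : (⇑φ ∘ T w) ∘ (T (-w)) = ⇑φ := by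
          funext x
          simp only [Function.comp_apply]
          rw [← hact]
          simp [hid]
        exact e1.trans (e2.trans (by rw [e3]))
      have h0 := horto _ (Set.mem_insert_of_mem _
        ⟨-w, Lp.compMeasurePreserving (T w) (hmp w) φ, rfl⟩)
      rw [hco] at h0
      have hIP : inner ℝ (Lp.compMeasurePreserving (T w) (hmp w) φ) φ = (inner ℝ φ φ : ℝ) := by
        rw [inner_sub_left, sub_eq_zero] at h0
        exact h0.symm
      have hnrm : ‖Lp.compMeasurePreserving (T w) (hmp w) φ‖ = ‖φ‖ :=
        Lp.norm_compMeasurePreserving φ (hmp w)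
      have hz : ‖Lp.compMeasurePreserving (T w) (hmp w) φ - φ‖ ^ 2 = 0 := by
        rw [norm_sub_sq_real, hnrm, hIP, real_inner_self_eq_norm_sq]
        ring
      have := norm_eq_zero.1 (pow_eq_zero_iff (two_ne_zero) |>.1 hz)
      exact sub_eq_zero.1 this
    have hφinv : ∀ w, (⇑φ) ∘ T w =ᵐ[m] ⇑φ := by
      intro w
      have h1 := Lp.coeFn_compMeasurePreserving φ (hmp w)
      rw [hUφ w] at h1
      exact h1.symm
    obtain ⟨b, hb⟩ := erg_fun hmp hact hid herg (Lp.stronglyMeasurable φ).measurable hφinv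
    have hone := horto oneL (Set.mem_insert _ _)
    have hb0 : b = 0 := by
      have hInt : (inner ℝ oneL φ : ℝ) = ∫ x, (oneL x) * (φ x) ∂m := by
        rw [L2.inner_def]
        congr 1
        funext x
        simp [mul_comm]
      have hval : ∫ x, (oneL x) * (φ x) ∂m = b := by
        have h1 : (fun x => oneL x * φ x) =ᵐ[m] fun _ => b := by
          filter_upwards [MemLp.coeFn_toLp (memLp_const (1 : ℝ)), hb] with x h1 h2
          rw [honeL, h1, h2, one_mul]
        rw [integral_congr_ae h1]
        simp
      rw [hInt, hval] at hone
      exact hone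
    apply Lp.ext
    refine hb.trans ?_
    rw [hb0]
    exact (Lp.coeFn_zero ℝ 2 m).symm.mono fun x hx => hx ▸ rfl
  -- the key approximation step
  have approx : ∀ ε : ℝ, 0 < ε → ∃ g : X → ℝ, Integrable g m ∧
      Tendsto (fun k => ∫ x in C k, g x ∂m) atTop (nhds (c * ∫ x, g x ∂m)) ∧
      ∫ x, |f x - g x| ∂m ≤ ε := by
    intro ε hε
    -- truncation
    set trunc : ℕ → X → ℝ := fun M x => max (min (f x) M) (-(M : ℝ)) with htrunc
    have hmeas : ∀ M : ℕ, AEStronglyMeasurable (trunc M) m := fun M =>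
      ((hf.aemeasurable.min aemeasurable_const).max aemeasurable_const).aestronglyMeasurable
    have habs : ∀ (M : ℕ) x, |trunc M x| ≤ |f x| := by
      intro M x
      rw [abs_le]
      constructor
      · have h1 : -|f x| ≤ min (f x) (M : ℝ) :=
          le_min (neg_abs_le (f x))
            (le_trans (neg_nonpos_of_nonneg (abs_nonneg _)) (Nat.cast_nonneg M))
        exact le_trans h1 (le_max_left _ _)
      · exact max_le (le_trans (min_le_left _ _) (le_abs_self _))
          (le_trans (neg_nonpos_of_nonneg (Nat.cast_nonneg M)) (abs_nonneg _))
    have hint : ∀ M : ℕ, Integrable (trunc M) m := fun M =>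
      hf.mono (hmeas M) (Eventually.of_forall fun x => by
        simpa [Real.norm_eq_abs] using habs M x)
    have hmem2 : ∀ M : ℕ, MemLp (trunc M) 2 m := fun M =>
      MemLp.of_bound (hmeas M) (M : ℝ) (Eventually.of_forall fun x => by
        rw [Real.norm_eq_abs, abs_le]
        exact ⟨le_max_right _ _,
          max_le (min_le_right _ _) (neg_le_self (Nat.cast_nonneg M))⟩)
    have htd : Tendsto (fun M => ∫ x, |f x - trunc M x| ∂m) atTop (nhds 0) := by
      have h0 : (0 : ℝ) = ∫ _x, (0 : ℝ) ∂m := by simp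
      rw [h0]
      refine tendsto_integral_of_dominated_convergence (fun x => 2 * |f x|)
        (fun M => ?_) (hf.abs.const_mul 2) (fun M => Eventually.of_forall fun x => ?_)
        (Eventually.of_forall fun x => ?_)
      · have := (hf.aestronglyMeasurable.sub (hmeas M)).norm
        simpa [Real.norm_eq_abs] using this
      · rw [Real.norm_eq_abs, abs_abs]
        calc |f x - trunc M x| ≤ |f x| + |trunc M x| := abs_sub _ _
          _ ≤ |f x| + |f x| := add_le_add le_rfl (habs M x)
          _ = 2 * |f x| := by ring
      · have hev : (fun M : ℕ => |f x - trunc M x|) =ᶠ[atTop] fun _ => (0 : ℝ) := by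
          filter_upwards [eventually_ge_atTop ⌈|f x|⌉₊] with M hM
          have hMx : |f x| ≤ (M : ℝ) := le_trans (Nat.le_ceil _) (Nat.cast_le.2 hM)
          have h1 : trunc M x = f x := by
            rw [htrunc]
            simp only
            rw [min_eq_left (le_trans (le_abs_self _) hMx),
              max_eq_left (le_trans (neg_le_neg hMx) (neg_abs_le _))]
          rw [h1, sub_self, abs_zero]
        exact tendsto_const_nhds.congr' hev.symm
    obtain ⟨M, hM⟩ : ∃ M : ℕ, ∫ x, |f x - trunc M x| ∂m ≤ ε / 2 := by
      have := (htd.eventually (gt_mem_nhds (half_pos hε))).exists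
      obtain ⟨M, hM⟩ := this
      exact ⟨M, le_of_lt hM⟩
    -- approximate the truncation in L²
    set x₀ : Lp ℝ 2 m := (hmem2 M).toLp (trunc M) with hx₀
    have hmemcl : x₀ ∈ closure ((Submodule.span ℝ G : Submodule ℝ (Lp ℝ 2 m)) : Set (Lp ℝ 2 m)) := by
      have h1 : x₀ ∈ (Submodule.span ℝ G).topologicalClosure := by
        rw [hKdense]; trivial
      exact h1
    obtain ⟨y, hyK, hyd⟩ := Metric.mem_closure_iff.1 hmemcl (ε / 2) (half_pos hε)
    have hyInt : Integrable (⇑y) m := (Lp.memLp y).integrable one_le_two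
    refine ⟨⇑y, hyInt, hQ y hyK, ?_⟩
    have hd : ∫ x, |trunc M x - y x| ∂m ≤ ε / 2 := by
      have haem : AEStronglyMeasurable (fun x => trunc M x - y x) m :=
        (hmeas M).sub (Lp.aestronglyMeasurable y)
      have e1 : ∫ x, |trunc M x - y x| ∂m
          = (eLpNorm (fun x => trunc M x - y x) 1 m).toReal := by
        rw [eLpNorm_one_eq_lintegral_enorm, ← integral_norm_eq_lintegral_enorm haem]
        simp [Real.norm_eq_abs]
      have e2 : eLpNorm (fun x => trunc M x - y x) 1 m
          ≤ eLpNorm (fun x => trunc M x - y x) 2 m :=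
        eLpNorm_le_eLpNorm_of_exponent_le (by norm_num) haem
      have e3 : eLpNorm (fun x => trunc M x - y x) 2 m = eLpNorm (⇑(x₀ - y)) 2 m := by
        apply eLpNorm_congr_ae
        filter_upwards [Lp.coeFn_sub x₀ y, MemLp.coeFn_toLp (hmem2 M)] with x h1 h2
        rw [h1, Pi.sub_apply, hx₀, h2]
      have e4 : (eLpNorm (⇑(x₀ - y)) 2 m).toReal = ‖x₀ - y‖ := (Lp.norm_def _).symm
      calc ∫ x, |trunc M x - y x| ∂m
          = (eLpNorm (fun x => trunc M x - y x) 1 m).toReal := e1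
        _ ≤ (eLpNorm (fun x => trunc M x - y x) 2 m).toReal := by
            refine ENNReal.toReal_mono ?_ e2
            rw [e3]
            exact Lp.eLpNorm_ne_top _
        _ = ‖x₀ - y‖ := by rw [e3, e4]
        _ = dist x₀ y := (dist_eq_norm _ _).symm
        _ ≤ ε / 2 := le_of_lt hyd
    calc ∫ x, |f x - y x| ∂m
        ≤ ∫ x, (|f x - trunc M x| + |trunc M x - y x|) ∂m := by
          refine integral_mono (hf.sub hyInt).abs
            (((hf.sub (hint M)).abs).add (((hint M).sub hyInt).abs)) fun x => ?_
          exact abs_sub_le _ _ _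
      _ = (∫ x, |f x - trunc M x| ∂m) + ∫ x, |trunc M x - y x| ∂m :=
          integral_add (hf.sub (hint M)).abs ((hint M).sub hyInt).abs
      _ ≤ ε / 2 + ε / 2 := add_le_add hM hd
      _ = ε := add_halves ε
  -- final ε/3 argument
  rw [Metric.tendsto_atTop]
  intro ε hε
  obtain ⟨g, hgInt, hgT, hgd⟩ := approx (ε / 4) (by positivity)
  have hgT' := Metric.tendsto_atTop.1 hgT (ε / 4) (by positivity)
  obtain ⟨N, hN⟩ := hgT'
  refine ⟨N, fun k hk => ?_⟩
  have habs : Integrable (fun x => |f x - g x|) m := (hf.sub hgInt).abs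
  have h1 : |(∫ x in C k, f x ∂m) - ∫ x in C k, g x ∂m| ≤ ∫ x, |f x - g x| ∂m := by
    rw [← integral_sub hf.integrableOn hgInt.integrableOn]
    calc |∫ x in C k, (f x - g x) ∂m| ≤ ∫ x in C k, |f x - g x| ∂m := by
          simpa [Real.norm_eq_abs] using
            norm_integral_le_integral_norm (μ := m.restrict (C k)) (fun x => f x - g x)
      _ ≤ ∫ x, |f x - g x| ∂m :=
          setIntegral_le_integral habs (Eventually.of_forall fun x => abs_nonneg _)
  have h2 : |c * (∫ x, g x ∂m) - c * ∫ x, f x ∂m| ≤ ∫ x, |f x - g x| ∂m := by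
    rw [← mul_sub, abs_mul, abs_of_pos hc]
    have h3 : |(∫ x, g x ∂m) - ∫ x, f x ∂m| ≤ ∫ x, |f x - g x| ∂m := by
      rw [← integral_sub hgInt hf]
      calc |∫ x, (g x - f x) ∂m| ≤ ∫ x, |g x - f x| ∂m := by
            simpa [Real.norm_eq_abs] using
              norm_integral_le_integral_norm (μ := m) (fun x => g x - f x)
        _ = ∫ x, |f x - g x| ∂m := by
            congr 1
            funext x
            rw [abs_sub_comm]
    calc c * |(∫ x, g x ∂m) - ∫ x, f x ∂m| ≤ 1 * |(∫ x, g x ∂m) - ∫ x, f x ∂m| :=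
          mul_le_mul_of_nonneg_right hc1 (abs_nonneg _)
      _ = |(∫ x, g x ∂m) - ∫ x, f x ∂m| := one_mul _
      _ ≤ ∫ x, |f x - g x| ∂m := h3
  have h4 := hN k hk
  rw [Real.dist_eq] at h4 ⊢
  calc |(∫ x in C k, f x ∂m) - c * ∫ x, f x ∂m|
      ≤ |(∫ x in C k, f x ∂m) - ∫ x in C k, g x ∂m|
        + |(∫ x in C k, g x ∂m) - c * ∫ x, f x ∂m| := abs_sub_le _ _ _
    _ ≤ |(∫ x in C k, f x ∂m) - ∫ x in C k, g x ∂m|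
        + (|(∫ x in C k, g x ∂m) - c * ∫ x, g x ∂m|
        + |c * (∫ x, g x ∂m) - c * ∫ x, f x ∂m|) :=
        add_le_add le_rfl (abs_sub_le _ _ _)
    _ = |(∫ x in C k, f x ∂m) - ∫ x in C k, g x ∂m|
        + |(∫ x in C k, g x ∂m) - c * ∫ x, g x ∂m|
        + |c * (∫ x, g x ∂m) - c * ∫ x, f x ∂m| := by ring
    _ ≤ (ε / 4) + (ε / 4) + (ε / 4) :=
        add_le_add (add_le_add (le_trans h1 hgd) (le_of_lt h4)) (le_trans h2 hgd)
    _ < ε := by linarith
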